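/- Let d ∈ {2,3}, let k be a nonnegative integer, let γ₁ > 0, and set γ := γ₁/2. Let u(x) := (log ‖x‖)^k · ‖x‖^{γ₁} for x ∈ ℝ^d, x ≠ 0. Then there exists a constant C > 0 such that for every ρ ∈ (0,1], ∫_{B(0,ρ)} ‖fderiv ℝ u x‖² dx ≤ C · ρ^{2γ+d−2}. In particular, the squared gradient of u is integrable on a neighborhood of the origin. -/

import Mathlib

open MeasureTheory Metric Set Module

lemma log_pow_bound (m : ℕ) {ε : ℝ} (hε : 0 < ε) :
    ∃ M : ℝ, 0 < M ∧ ∀ r : ℝ, 0 < r → r < 1 → |Real.log r| ^ m ≤ M * r ^ (-ε) := by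
  rcases Nat.eq_zero_or_pos m with hm | hm
  · refine ⟨1, one_pos, fun r hr hr1 => ?_⟩
    rw [hm, pow_zero, one_mul]
    exact Real.one_le_rpow_of_pos_of_le_one_of_nonpos hr hr1.le (by linarith)
  · set t := ε / m with ht
    have hm' : (0:ℝ) < m := by exact_mod_cast hm
    have htpos : 0 < t := div_pos hε hm'
    refine ⟨(t⁻¹) ^ m, by positivity, fun r hr hr1 => ?_⟩
    have h1 : |Real.log r| ≤ t⁻¹ * r ^ (-t) := by
      have h2 := (Real.abs_log_mul_self_rpow_lt r t hr hr1.le htpos).le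
      rw [abs_mul, abs_of_nonneg (Real.rpow_nonneg hr.le t), one_div] at h2
      have h3 : (0:ℝ) < r ^ t := Real.rpow_pos_of_pos hr t
      rw [Real.rpow_neg hr.le]
      calc |Real.log r| = |Real.log r| * r ^ t * (r ^ t)⁻¹ := by field_simp
        _ ≤ t⁻¹ * (r ^ t)⁻¹ := by gcongr
    calc |Real.log r| ^ m ≤ (t⁻¹ * r ^ (-t)) ^ m := by
          gcongr
      _ = t⁻¹ ^ m * (r ^ (-t)) ^ m := mul_pow _ _ _
      _ = t⁻¹ ^ m * r ^ (-ε) := by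
          rw [← Real.rpow_natCast (r ^ (-t)) m, ← Real.rpow_mul hr.le]
          congr 2
          rw [ht]
          field_simp

lemma integrableOn_rpow_ball {d : ℕ} (hd : 0 < d) {α : ℝ} (hα : 0 < α + d) :
    IntegrableOn (fun x : EuclideanSpace ℝ (Fin d) => ‖x‖ ^ α)
      (Metric.ball (0 : EuclideanSpace ℝ (Fin d)) 1) := by
  haveI : NeZero d := ⟨hd.ne'⟩
  haveI : Nontrivial (EuclideanSpace ℝ (Fin d)) :=
    Module.nontrivial_of_finrank_pos (R := ℝ) (by rw [finrank_euclideanSpace_fin]; exact hd)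
  set E := EuclideanSpace ℝ (Fin d)
  have hfinrank : finrank ℝ E = d := finrank_euclideanSpace_fin
  constructor
  · exact (measurable_norm.pow measurable_const).aestronglyMeasurable
  · rw [hasFiniteIntegral_iff_norm]
    set S : ℕ → Set E := fun n => closedBall 0 ((1/2 : ℝ)^n) \ ball 0 ((1/2 : ℝ)^(n+1)) with hS
    have hcover : ball (0 : E) 1 ⊆ {0} ∪ ⋃ n, S n := by
      intro x hx
      rcases eq_or_ne x 0 with rfl | hx0
      · exact Or.inl rfl
      right
      have hr : 0 < ‖x‖ := norm_pos_iff.2 hx0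
      have hr1 : ‖x‖ < 1 := mem_ball_zero_iff.1 hx
      have hex : ∃ n : ℕ, (1/2 : ℝ)^n < ‖x‖ := exists_pow_lt_of_lt_one hr (by norm_num)
      set N := Nat.find hex with hN
      have hNlt : (1/2 : ℝ)^N < ‖x‖ := Nat.find_spec hex
      have hNne : N ≠ 0 := by
        intro h
        rw [h, pow_zero] at hNlt; linarith
      refine mem_iUnion.2 ⟨N - 1, ?_, ?_⟩
      · have hle : ¬ ((1/2 : ℝ)^(N-1) < ‖x‖) := Nat.find_min hex (by omega)
        exact mem_closedBall_zero_iff.2 (le_of_not_gt hle)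
      · intro hmem
        have := mem_ball_zero_iff.1 hmem
        rw [Nat.sub_add_cancel (Nat.one_le_iff_ne_zero.2 hNne)] at this
        linarith
    calc ∫⁻ a in ball (0:E) 1, ENNReal.ofReal ‖(‖a‖ : ℝ) ^ α‖
        ≤ ∫⁻ a in ({0} ∪ ⋃ n, S n : Set E), ENNReal.ofReal ‖(‖a‖ : ℝ) ^ α‖ :=
          lintegral_mono_set hcover
      _ ≤ (∫⁻ a in ({0} : Set E), ENNReal.ofReal ‖(‖a‖ : ℝ) ^ α‖)
          + ∫⁻ a in (⋃ n, S n), ENNReal.ofReal ‖(‖a‖ : ℝ) ^ α‖ := lintegral_union_le _ _ _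
      _ ≤ 0 + ∑' n, ∫⁻ a in S n, ENNReal.ofReal ‖(‖a‖ : ℝ) ^ α‖ := by
          gcongr
          · exact le_of_eq (setLIntegral_measure_zero _ _ (measure_singleton 0))
          · exact lintegral_iUnion_le _ _
      _ < ⊤ := by
          rw [zero_add]
          set t := (1/2 : ℝ) ^ (α + d) with htdef
          have ht0 : 0 < t := Real.rpow_pos_of_pos (by norm_num) _
          have ht1 : t < 1 := Real.rpow_lt_one (by norm_num) (by norm_num) hα
          have hterm : ∀ n : ℕ, ∫⁻ a in S n, ENNReal.ofReal ‖(‖a‖ : ℝ) ^ α‖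
              ≤ (ENNReal.ofReal ((2:ℝ) ^ |α|) * volume (ball (0:E) 1)) * (ENNReal.ofReal t) ^ n := by
            intro n
            have hb : ∀ a ∈ S n, ENNReal.ofReal ‖(‖a‖ : ℝ) ^ α‖
                ≤ ENNReal.ofReal ((2:ℝ) ^ |α| * ((1/2 : ℝ)^n) ^ α) := by
              intro a ha
              rw [Real.norm_eq_abs, abs_of_nonneg (Real.rpow_nonneg (norm_nonneg a) α)]
              apply ENNReal.ofReal_le_ofReal
              have h1 : (1/2 : ℝ)^(n+1) ≤ ‖a‖ := by
                by_contra h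
                exact ha.2 (mem_ball_zero_iff.2 (lt_of_not_ge h))
              have h2 : ‖a‖ ≤ (1/2 : ℝ)^n := mem_closedBall_zero_iff.1 ha.1
              have hpos : (0:ℝ) < (1/2 : ℝ)^(n+1) := by positivity
              rcases le_or_gt 0 α with hαs | hαs
              · calc ‖a‖ ^ α ≤ ((1/2 : ℝ)^n) ^ α := Real.rpow_le_rpow (norm_nonneg a) h2 hαs
                  _ ≤ (2:ℝ) ^ |α| * ((1/2 : ℝ)^n) ^ α := by
                    nth_rewrite 1 [← one_mul (((1/2 : ℝ)^n) ^ α)]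
                    exact mul_le_mul_of_nonneg_right
                      (Real.one_le_rpow one_le_two (abs_nonneg α))
                      (Real.rpow_nonneg (by positivity) α)
              · calc ‖a‖ ^ α ≤ ((1/2 : ℝ)^(n+1)) ^ α :=
                      Real.rpow_le_rpow_of_nonpos hpos h1 hαs.le
                  _ = (2:ℝ) ^ |α| * ((1/2 : ℝ)^n) ^ α := by
                    rw [pow_succ, Real.mul_rpow (by positivity) (by norm_num), mul_comm]
                    congr 1
                    rw [abs_of_neg hαs, one_div,
                      Real.inv_rpow (by norm_num : (0:ℝ) ≤ 2),
                      ← Real.rpow_neg (by norm_num : (0:ℝ) ≤ 2)]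
            calc ∫⁻ a in S n, ENNReal.ofReal ‖(‖a‖ : ℝ) ^ α‖
                ≤ ∫⁻ _ in S n, ENNReal.ofReal ((2:ℝ) ^ |α| * ((1/2 : ℝ)^n) ^ α) :=
                  setLIntegral_mono' (measurableSet_closedBall.diff measurableSet_ball) hb
              _ = ENNReal.ofReal ((2:ℝ) ^ |α| * ((1/2 : ℝ)^n) ^ α) * volume (S n) :=
                  setLIntegral_const _ _
              _ ≤ ENNReal.ofReal ((2:ℝ) ^ |α| * ((1/2 : ℝ)^n) ^ α)
                    * volume (closedBall (0:E) ((1/2 : ℝ)^n)) := by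
                  gcongr
                  exact diff_subset
              _ = (ENNReal.ofReal ((2:ℝ) ^ |α|) * volume (ball (0:E) 1)) * (ENNReal.ofReal t) ^ n := by
                  rw [Measure.addHaar_closedBall _ _ (by positivity), hfinrank]
                  have hp : (0:ℝ) < (1/2:ℝ)^n := by positivity
                  have hq : ((1/2:ℝ)^n) ^ α * ((1/2:ℝ)^n : ℝ) ^ (d:ℕ) = t ^ n := by
                    rw [← Real.rpow_natCast ((1/2:ℝ)^n) d, ← Real.rpow_add hp, htdef,
                      ← Real.rpow_natCast ((1/2:ℝ)) n, ← Real.rpow_mul (by norm_num),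
                      mul_comm (n:ℝ), Real.rpow_mul (by norm_num), Real.rpow_natCast]
                  rw [ENNReal.ofReal_mul (by positivity), ← ENNReal.ofReal_pow ht0.le, ← hq,
                    ENNReal.ofReal_mul (Real.rpow_nonneg hp.le α)]
                  ring
          calc ∑' n, ∫⁻ a in S n, ENNReal.ofReal ‖(‖a‖ : ℝ) ^ α‖
              ≤ ∑' n, (ENNReal.ofReal ((2:ℝ) ^ |α|) * volume (ball (0:E) 1)) * (ENNReal.ofReal t) ^ n :=
                ENNReal.tsum_le_tsum hterm
            _ = (ENNReal.ofReal ((2:ℝ) ^ |α|) * volume (ball (0:E) 1)) * ∑' n, (ENNReal.ofReal t) ^ n :=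
                ENNReal.tsum_mul_left
            _ < ⊤ := by
                rw [ENNReal.tsum_geometric]
                apply ENNReal.mul_lt_top
                · exact ENNReal.mul_lt_top ENNReal.ofReal_lt_top measure_ball_lt_top
                · exact ENNReal.inv_lt_top.2 (tsub_pos_iff_lt.2 (ENNReal.ofReal_lt_one.2 ht1))

theorem stmt_6 (d : ℕ) (hd : d = 2 ∨ d = 3) (k : ℕ) (γ₁ : ℝ) (hγ₁ : 0 < γ₁)
    (γ : ℝ) (hγ : γ = γ₁ / 2)
    (u : EuclideanSpace ℝ (Fin d) → ℝ)
    (hu : ∀ x : EuclideanSpace ℝ (Fin d), x ≠ 0 → u x = (Real.log ‖x‖) ^ k * ‖x‖ ^ γ₁) :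
    (∃ C : ℝ, 0 < C ∧ ∀ ρ : ℝ, 0 < ρ → ρ ≤ 1 →
      (∫ x in Metric.ball (0 : EuclideanSpace ℝ (Fin d)) ρ, ‖fderiv ℝ u x‖ ^ 2) ≤
        C * ρ ^ (2 * γ + d - 2)) ∧
    IntegrableOn (fun x : EuclideanSpace ℝ (Fin d) => ‖fderiv ℝ u x‖ ^ 2)
      (Metric.ball (0 : EuclideanSpace ℝ (Fin d)) 1) := by
  subst hγ
  have hd0 : 0 < d := by rcases hd with h | h <;> omega
  have hd2 : (2:ℝ) ≤ (d:ℝ) := by rcases hd with h | h <;> simp [h] <;> norm_num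
  haveI : NeZero d := ⟨hd0.ne'⟩
  haveI : Nontrivial (EuclideanSpace ℝ (Fin d)) :=
    Module.nontrivial_of_finrank_pos (R := ℝ) (by rw [finrank_euclideanSpace_fin]; exact hd0)
  set α : ℝ := 3/2 * γ₁ - 2 with hα
  have hαd : 0 < α + d := by rw [hα]; linarith
  obtain ⟨M₁, hM₁pos, hM₁⟩ := log_pow_bound (m := k - 1) (ε := γ₁/4) (by linarith)
  obtain ⟨M₂, hM₂pos, hM₂⟩ := log_pow_bound (m := k) (ε := γ₁/4) (by linarith)
  set Md : ℝ := k * M₁ + γ₁ * M₂ with hMd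
  have hMdpos : 0 < Md := by positivity
  -- pointwise bound on the derivative
  have hpt : ∀ x : EuclideanSpace ℝ (Fin d), x ≠ 0 → ‖x‖ < 1 →
      ‖fderiv ℝ u x‖ ≤ Md * ‖x‖ ^ (3/4 * γ₁ - 1) := by
    intro x hx hx1
    have hr : 0 < ‖x‖ := norm_pos_iff.2 hx
    set r := ‖x‖ with hrdef
    set φ' : ℝ := (k:ℝ) * (Real.log r)^(k-1) * r⁻¹ * r^γ₁
        + (Real.log r)^k * (γ₁ * r^(γ₁-1)) with hφ'def
    have hev : u =ᶠ[nhds x] fun y => (Real.log ‖y‖)^k * ‖y‖^γ₁ := by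
      filter_upwards [IsOpen.mem_nhds isOpen_compl_singleton hx] with y hy
      exact hu y hy
    have hlog : HasDerivAt Real.log r⁻¹ r := Real.hasDerivAt_log hr.ne'
    have hpowk : HasDerivAt (fun t => (Real.log t)^k)
        ((k:ℝ) * (Real.log r)^(k-1) * r⁻¹) r := hlog.pow k
    have hrpow : HasDerivAt (fun t : ℝ => t ^ γ₁) (γ₁ * r ^ (γ₁ - 1)) r :=
      Real.hasDerivAt_rpow_const (Or.inl hr.ne')
    have hφ : HasDerivAt (fun t => (Real.log t)^k * t^γ₁) φ' r := hpowk.mul hrpow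
    have hnd : DifferentiableAt ℝ (fun y : EuclideanSpace ℝ (Fin d) => ‖y‖) x :=
      (contDiffAt_norm ℝ (n := 1) hx).differentiableAt one_ne_zero
    have hcomp : HasFDerivAt (fun y : EuclideanSpace ℝ (Fin d) => (Real.log ‖y‖)^k * ‖y‖^γ₁)
        (φ' • fderiv ℝ (fun y : EuclideanSpace ℝ (Fin d) => ‖y‖) x) x :=
      by have := hφ.comp_hasFDerivAt x hnd.hasFDerivAt; exact this
    have hfd : fderiv ℝ u x
        = φ' • fderiv ℝ (fun y : EuclideanSpace ℝ (Fin d) => ‖y‖) x := by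
      rw [hev.fderiv_eq]; exact hcomp.fderiv
    have hn1 : ‖fderiv ℝ (fun y : EuclideanSpace ℝ (Fin d) => ‖y‖) x‖ ≤ 1 := by
      have := norm_fderiv_le_of_lipschitz (𝕜 := ℝ) (x₀ := x)
        (lipschitzWith_one_norm : LipschitzWith 1 (fun y : EuclideanSpace ℝ (Fin d) => ‖y‖))
      simpa using this
    have e1 : r⁻¹ * r^γ₁ = r^(γ₁-1) := by
      rw [← Real.rpow_neg_one r, ← Real.rpow_add hr]; ring_nf
    have e2 : r^(-(γ₁/4)) * r^(γ₁-1) = r^(3/4*γ₁-1) := by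
      rw [← Real.rpow_add hr]; congr 1; ring
    have habs : |φ'| ≤ Md * r ^ (3/4*γ₁ - 1) := by
      have t1 : |(k:ℝ) * (Real.log r)^(k-1) * r⁻¹ * r^γ₁|
          = (k:ℝ) * |Real.log r|^(k-1) * r^(γ₁-1) := by
        rw [abs_mul, abs_mul, abs_mul, abs_pow, Nat.abs_cast,
          abs_of_nonneg (inv_nonneg.2 hr.le), abs_of_nonneg (Real.rpow_nonneg hr.le _),
          mul_assoc, e1]
      have t2 : |(Real.log r)^k * (γ₁ * r^(γ₁-1))| = γ₁ * |Real.log r|^k * r^(γ₁-1) := by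
        rw [abs_mul, abs_mul, abs_pow, abs_of_pos hγ₁,
          abs_of_nonneg (Real.rpow_nonneg hr.le _)]
        ring
      calc |φ'| ≤ |(k:ℝ) * (Real.log r)^(k-1) * r⁻¹ * r^γ₁|
            + |(Real.log r)^k * (γ₁ * r^(γ₁-1))| := abs_add_le _ _
        _ = (k:ℝ) * |Real.log r|^(k-1) * r^(γ₁-1) + γ₁ * |Real.log r|^k * r^(γ₁-1) := by
            rw [t1, t2]
        _ ≤ (k:ℝ) * (M₁ * r^(-(γ₁/4))) * r^(γ₁-1)
            + γ₁ * (M₂ * r^(-(γ₁/4))) * r^(γ₁-1) := by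
            gcongr
            · exact hM₁ r hr hx1
            · exact hM₂ r hr hx1
        _ = Md * (r^(-(γ₁/4)) * r^(γ₁-1)) := by rw [hMd]; ring
        _ = Md * r ^ (3/4*γ₁ - 1) := by rw [e2]
    calc ‖fderiv ℝ u x‖ ≤ |φ'| := by
          rw [hfd, norm_smul, Real.norm_eq_abs]
          exact mul_le_of_le_one_right (abs_nonneg _) hn1
      _ ≤ Md * r ^ (3/4*γ₁ - 1) := habs
  have hpt2 : ∀ x : EuclideanSpace ℝ (Fin d), x ≠ 0 → ‖x‖ < 1 →
      ‖fderiv ℝ u x‖ ^ 2 ≤ Md^2 * ‖x‖ ^ α := by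
    intro x hx hx1
    have hr : 0 < ‖x‖ := norm_pos_iff.2 hx
    calc ‖fderiv ℝ u x‖ ^ 2 ≤ (Md * ‖x‖ ^ (3/4 * γ₁ - 1)) ^ 2 :=
          pow_le_pow_left₀ (norm_nonneg _) (hpt x hx hx1) 2
      _ = Md^2 * ‖x‖ ^ α := by
        rw [mul_pow, ← Real.rpow_natCast (‖x‖ ^ (3/4 * γ₁ - 1)) 2,
          ← Real.rpow_mul hr.le]
        congr 1
        push_cast
        rw [hα]
        ring
  have hint : IntegrableOn (fun x : EuclideanSpace ℝ (Fin d) => ‖x‖ ^ α)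
      (Metric.ball 0 1) := integrableOn_rpow_ball hd0 hαd
  have hint2 : IntegrableOn (fun x : EuclideanSpace ℝ (Fin d) => Md^2 * ‖x‖ ^ α)
      (Metric.ball 0 1) := hint.const_mul _
  have hmeas : ∀ s : Set (EuclideanSpace ℝ (Fin d)), AEStronglyMeasurable
      (fun x : EuclideanSpace ℝ (Fin d) => ‖fderiv ℝ u x‖ ^ 2) (volume.restrict s) :=
    fun s => ((measurable_fderiv ℝ u).norm.pow_const 2).aestronglyMeasurable
  have hae : ∀ ρ : ℝ, ρ ≤ 1 →
      ∀ᵐ x ∂(volume.restrict (Metric.ball (0 : EuclideanSpace ℝ (Fin d)) ρ)),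
      ‖fderiv ℝ u x‖ ^ 2 ≤ Md^2 * ‖x‖ ^ α := by
    intro ρ hρ1
    have h0 : ∀ᵐ x ∂(volume.restrict (Metric.ball (0 : EuclideanSpace ℝ (Fin d)) ρ)),
        x ≠ (0 : EuclideanSpace ℝ (Fin d)) := by
      refine ae_restrict_of_ae ?_
      have h00 : volume ({(0 : EuclideanSpace ℝ (Fin d))} : Set _) = 0 := measure_singleton _
      rw [ae_iff]
      convert h00 using 2
      ext y; simp
    filter_upwards [h0, ae_restrict_mem measurableSet_ball] with x hx0 hxm
    exact hpt2 x hx0 (lt_of_lt_of_le (mem_ball_zero_iff.1 hxm) hρ1)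
  have hDu : IntegrableOn (fun x : EuclideanSpace ℝ (Fin d) => ‖fderiv ℝ u x‖ ^ 2)
      (Metric.ball 0 1) := by
    refine hint2.mono' (hmeas _) ?_
    filter_upwards [hae 1 le_rfl] with x hx
    rwa [Real.norm_eq_abs, abs_of_nonneg (by positivity)]
  set I₁ : ℝ := ∫ x in Metric.ball (0 : EuclideanSpace ℝ (Fin d)) 1, ‖x‖ ^ α with hI₁def
  have hI₁ : 0 ≤ I₁ :=
    setIntegral_nonneg measurableSet_ball (fun x _ => Real.rpow_nonneg (norm_nonneg x) α)
  refine ⟨⟨Md^2 * I₁ + 1, by positivity, ?_⟩, hDu⟩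
  intro ρ hρ hρ1
  have hD : finrank ℝ (EuclideanSpace ℝ (Fin d)) = d := finrank_euclideanSpace_fin
  have hscale : (∫ x in Metric.ball (0 : EuclideanSpace ℝ (Fin d)) ρ, ‖x‖ ^ α)
      = ρ ^ ((d:ℝ) + α) * I₁ := by
    have h1 := MeasureTheory.Measure.setIntegral_comp_smul_of_pos volume
      (fun x : EuclideanSpace ℝ (Fin d) => ‖x‖ ^ α) (Metric.ball 0 1) hρ
    rw [smul_unitBall hρ.ne'] at h1
    simp only [norm_smul, Real.norm_eq_abs, abs_of_pos hρ, smul_eq_mul, hD] at h1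
    simp only [Real.mul_rpow hρ.le (norm_nonneg _)] at h1
    rw [integral_const_mul] at h1
    have hρd : (0:ℝ) < ρ ^ d := by positivity
    have h3 : (∫ x in Metric.ball (0 : EuclideanSpace ℝ (Fin d)) ρ, ‖x‖ ^ α)
        = ρ^(d:ℕ) * (ρ^α * I₁) := by
      rw [h1, ← mul_assoc, mul_inv_cancel₀ hρd.ne', one_mul]
    rw [h3, ← Real.rpow_natCast ρ d, ← mul_assoc, ← Real.rpow_add hρ]
  have hmono : ρ^((d:ℝ)+α) ≤ ρ^(2*(γ₁/2)+(d:ℝ)-2) :=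
    Real.rpow_le_rpow_of_exponent_ge hρ hρ1 (by rw [hα]; linarith)
  have hρt : 0 ≤ ρ^(2*(γ₁/2)+(d:ℝ)-2) := Real.rpow_nonneg hρ.le _
  calc (∫ x in Metric.ball (0 : EuclideanSpace ℝ (Fin d)) ρ, ‖fderiv ℝ u x‖ ^ 2)
      ≤ ∫ x in Metric.ball (0 : EuclideanSpace ℝ (Fin d)) ρ, Md^2 * ‖x‖ ^ α :=
        integral_mono_ae (hDu.mono_set (Metric.ball_subset_ball hρ1))
          (hint2.mono_set (Metric.ball_subset_ball hρ1)) (hae ρ hρ1)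
    _ = Md^2 * ∫ x in Metric.ball (0 : EuclideanSpace ℝ (Fin d)) ρ, ‖x‖ ^ α :=
        integral_const_mul _ _
    _ = Md^2 * (ρ^((d:ℝ)+α) * I₁) := by rw [hscale]
    _ ≤ (Md^2 * I₁ + 1) * ρ ^ (2*(γ₁/2)+(d:ℝ)-2) := by
        nlinarith [mul_le_mul_of_nonneg_left hmono (mul_nonneg (sq_nonneg Md) hI₁),
          Real.rpow_nonneg hρ.le ((d:ℝ)+α)]
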